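/- Let A be a real symmetric positive definite d×d matrix and M a real symmetric positive semidefinite d×d matrix. Suppose ε_t, ε_s > 0 and there exists x ∈ ℝ^d with x^T M x ≥ ε_t and x^T A x ≤ ε_s. Then det(A + M) ≥ (1 + ε_t/(d·ε_s)) · det(A). -/

import Mathlib

open Matrix

open Finset

open scoped MatrixOrder

-- aux 1: product inequality
lemma aux_prod {ι : Type*} (s : Finset ι) (f : ι → ℝ) (hf : ∀ i ∈ s, 0 ≤ f i) :
    1 + ∑ i ∈ s, f i ≤ ∏ i ∈ s, (1 + f i) := by
  classical
  induction s using Finset.induction_on with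
  | empty => simp
  | insert _ _ hns ih =>
    rename_i a s'
    rw [Finset.sum_insert hns, Finset.prod_insert hns]
    have h0 : 0 ≤ f a := hf a (mem_insert_self a s')
    have hs : ∀ i ∈ s', 0 ≤ f i := fun i hi => hf i (mem_insert_of_mem hi)
    have ih' := ih hs
    have hsum : 0 ≤ ∑ i ∈ s', f i := Finset.sum_nonneg hs
    nlinarith [Finset.sum_nonneg hs]

-- aux 2: quadratic form bounded by trace
lemma aux_trace {n : Type*} [Fintype n] [DecidableEq n] (N : Matrix n n ℝ)
    (hN : N.PosSemidef) (y : n → ℝ) :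
    y ⬝ᵥ N *ᵥ y ≤ N.trace * (y ⬝ᵥ y) := by
  classical
  set C := CFC.sqrt N with hC
  have hCs : C * C = N := CFC.sqrt_mul_sqrt_self N hN.nonneg
  have hCh : C.IsHermitian := (CFC.sqrt_nonneg N).posSemidef.1
  have hT : Cᵀ = C := by
    ext i j
    have := congrFun (congrFun hCh.eq i) j
    simpa [conjTranspose_apply] using this
  have h1 : y ⬝ᵥ N *ᵥ y = (C *ᵥ y) ⬝ᵥ (C *ᵥ y) := by
    rw [← hCs, ← mulVec_mulVec, dotProduct_mulVec y, ← mulVec_transpose, hT]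
  have h2 : N.trace = ∑ i, ∑ j, (C i j)^2 := by
    rw [← hCs, Matrix.trace]
    congr 1
    ext i
    rw [Matrix.diag, Matrix.mul_apply]
    congr 1; ext j
    have hji : C j i = C i j := by conv_lhs => rw [← hT, transpose_apply]
    rw [hji]; ring
  rw [h1, h2, Finset.sum_mul]
  have hdot : y ⬝ᵥ y = ∑ j, (y j)^2 := by simp [dotProduct, sq]
  apply Finset.sum_le_sum
  intro i _
  have := Finset.sum_mul_sq_le_sq_mul_sq Finset.univ (fun j => C i j) y
  calc (C *ᵥ y) i * (C *ᵥ y) i = (∑ j, C i j * y j)^2 := by rw [Matrix.mulVec, dotProduct]; ring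
    _ ≤ (∑ j, (C i j)^2) * ∑ j, (y j)^2 := this
    _ = (∑ j, (C i j)^2) * (y ⬝ᵥ y) := by rw [hdot]

-- aux 3: det (1 + N) ≥ 1 + trace N for PSD N
lemma aux_det {n : Type*} [Fintype n] [DecidableEq n] (N : Matrix n n ℝ)
    (hN : N.PosSemidef) : 1 + N.trace ≤ (1 + N).det := by
  classical
  have hNh := hN.1
  set U : Matrix n n ℝ := (hNh.eigenvectorUnitary : Matrix n n ℝ) with hUdef
  set μ := hNh.eigenvalues with hμ
  have hcoe : (RCLike.ofReal ∘ μ : n → ℝ) = μ := funext fun i => rfl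
  have hspec : N = U * diagonal μ * star U := by
    have := hNh.spectral_theorem
    rwa [hcoe] at this
  have hU1 : U * star U = 1 := Matrix.mem_unitaryGroup_iff.mp hNh.eigenvectorUnitary.2
  have hU2 : star U * U = 1 := Matrix.mem_unitaryGroup_iff'.mp hNh.eigenvectorUnitary.2
  have honeadd : 1 + N = U * (diagonal (fun i => 1 + μ i)) * star U := by
    have : (diagonal (fun i => 1 + μ i) : Matrix n n ℝ) = 1 + diagonal μ := by
      rw [← diagonal_one, ← diagonal_add]
    rw [this, mul_add, add_mul, mul_one, hU1, ← hspec]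
  have hdet : (1 + N).det = ∏ i, (1 + μ i) := by
    rw [honeadd, det_mul, det_mul, mul_comm, ← mul_assoc, ← det_mul, hU2, det_one, one_mul,
      det_diagonal]
  have htr : N.trace = ∑ i, μ i := by
    rw [hspec, trace_mul_cycle, hU2, one_mul, trace_diagonal]
  rw [hdet, htr]
  exact aux_prod Finset.univ μ (fun i _ => hN.eigenvalues_nonneg i)

lemma aux_trace_nonneg {n : Type*} [Fintype n] [DecidableEq n] (N : Matrix n n ℝ)
    (hN : N.PosSemidef) : 0 ≤ N.trace := by
  rw [Matrix.trace]
  apply Finset.sum_nonneg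
  intro i _
  have := hN.dotProduct_mulVec_nonneg (Pi.single i 1)
  simpa [Matrix.diag, dotProduct, mulVec, Pi.single_apply, Finset.sum_ite_eq] using this

/-- **Single-step determinant growth.**
If `A` is symmetric positive definite, `M` is symmetric positive semidefinite, and
some direction `x` satisfies `xᵀ M x ≥ ε_t` and `xᵀ A x ≤ ε_s`, then
`det (A + M) ≥ (1 + ε_t / (d ε_s)) · det A`. -/
theorem dmq_det_growth_step
    (d : ℕ) (A M : Matrix (Fin d) (Fin d) ℝ)
    (hA : A.PosDef) (hM : M.PosSemidef)
    (εt εs : ℝ) (hεt : 0 < εt) (hεs : 0 < εs)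
    (hx : ∃ x : Fin d → ℝ, εt ≤ x ⬝ᵥ M.mulVec x ∧ x ⬝ᵥ A.mulVec x ≤ εs) :
    (1 + εt / (d * εs)) * A.det ≤ (A + M).det := by
  obtain ⟨x, hMx, hAx⟩ := hx
  have hd : 0 < d := by
    by_contra h
    push_neg at h
    have hd0 : d = 0 := Nat.le_zero.mp h
    subst hd0
    rw [show (x ⬝ᵥ M.mulVec x) = 0 by simp [dotProduct]] at hMx
    linarith
  set S := CFC.sqrt A with hSdef
  have hSh : S.IsHermitian := (CFC.sqrt_nonneg A).posSemidef.1
  have hT : Sᵀ = S := by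
    ext i j
    have := congrFun (congrFun hSh.eq i) j
    simpa [conjTranspose_apply] using this
  have hSS : S * S = A := CFC.sqrt_mul_sqrt_self A hA.posSemidef.nonneg
  have hdetS : S.det * S.det = A.det := by rw [← det_mul, hSS]
  have hdetS0 : IsUnit S.det := by
    apply isUnit_iff_ne_zero.mpr
    intro h
    have := hA.det_pos
    rw [← hdetS, h, mul_zero] at this
    exact lt_irrefl _ this
  have hSi : S * S⁻¹ = 1 := mul_nonsing_inv S hdetS0
  have hSi' : S⁻¹ * S = 1 := nonsing_inv_mul S hdetS0
  have hSinvh : S⁻¹.IsHermitian := hSh.inv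
  set N := S⁻¹ * M * S⁻¹ with hNdef
  have hNpsd : N.PosSemidef := by
    have := hM.mul_mul_conjTranspose_same S⁻¹
    rwa [hSinvh.eq] at this
  have hSNS : S * N * S = M := by
    calc S * (S⁻¹ * M * S⁻¹) * S = (S * S⁻¹) * M * (S⁻¹ * S) := by noncomm_ring
      _ = M := by rw [hSi, hSi', one_mul, mul_one]
  have hAM : A + M = S * (1 + N) * S := by
    rw [mul_add, add_mul, mul_one, hSS, hSNS]
  set y := S *ᵥ x with hy
  have hdotS : ∀ z : Fin d → ℝ, x ⬝ᵥ (S *ᵥ z) = y ⬝ᵥ z := by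
    intro z
    rw [dotProduct_mulVec, ← mulVec_transpose, hT]
  have hyN : y ⬝ᵥ N *ᵥ y = x ⬝ᵥ M *ᵥ x := by
    have h1 : M *ᵥ x = S *ᵥ (N *ᵥ (S *ᵥ x)) := by
      rw [← hSNS, ← mulVec_mulVec, ← mulVec_mulVec]
    rw [h1, hdotS]
  have hyy : y ⬝ᵥ y = x ⬝ᵥ A *ᵥ x := by
    have h1 : A *ᵥ x = S *ᵥ (S *ᵥ x) := by rw [← hSS, ← mulVec_mulVec]
    rw [h1, hdotS]
  have htrN0 : 0 ≤ N.trace := aux_trace_nonneg N hNpsd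
  have htr : εt / εs ≤ N.trace := by
    rw [div_le_iff₀ hεs]
    calc εt ≤ x ⬝ᵥ M *ᵥ x := hMx
      _ = y ⬝ᵥ N *ᵥ y := hyN.symm
      _ ≤ N.trace * (y ⬝ᵥ y) := aux_trace N hNpsd y
      _ = N.trace * (x ⬝ᵥ A *ᵥ x) := by rw [hyy]
      _ ≤ N.trace * εs := by
          apply mul_le_mul_of_nonneg_left hAx htrN0
  have hdetAM : (A + M).det = A.det * (1 + N).det := by
    rw [hAM, det_mul, det_mul, ← hdetS]; ring
  have hdet1N : 1 + N.trace ≤ (1 + N).det := aux_det N hNpsd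
  have hfrac : εt / (d * εs) ≤ εt / εs := by
    have h1 : (1:ℝ) ≤ d := by exact_mod_cast hd
    apply div_le_div_of_nonneg_left hεt.le hεs
    nlinarith
  have hdetA : 0 < A.det := hA.det_pos
  calc (1 + εt / (d * εs)) * A.det ≤ (1 + N.trace) * A.det := by
        apply mul_le_mul_of_nonneg_right _ hdetA.le
        linarith [hfrac.trans htr]
    _ ≤ (1 + N).det * A.det := mul_le_mul_of_nonneg_right hdet1N hdetA.le
    _ = (A + M).det := by rw [hdetAM]; ring
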